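/- Let ε > 0 and let P, Q be probability measures on a common measurable space with P ≪ Q that are (ε,0)-close. Then the Kullback–Leibler divergence satisfies D(P‖Q) ≤ ε · (e^ε − 1)(1 − e^{−ε}) / (e^ε − e^{−ε}). -/

import Mathlib

open MeasureTheory Real

/-- If `P ≪ Q` are probability measures that are `(ε,0)`-close for `ε > 0`, then
the Kullback–Leibler divergence `D(P‖Q) = ∫ log (dP/dQ) dP` satisfies
`D(P‖Q) ≤ ε (e^ε - 1)(1 - e^{-ε}) / (e^ε - e^{-ε})`. -/
theorem kl_le_of_eps_close
    {Ω : Type*} [MeasurableSpace Ω] (P Q : Measure Ω)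
    [IsProbabilityMeasure P] [IsProbabilityMeasure Q]
    (ε : ℝ) (hε : 0 < ε) (hPQ : P ≪ Q)
    (hclose : ∀ A : Set Ω, MeasurableSet A →
      P A ≤ ENNReal.ofReal (Real.exp ε) * Q A ∧ Q A ≤ ENNReal.ofReal (Real.exp ε) * P A) :
    ∫ x, Real.log ((P.rnDeriv Q x).toReal) ∂P
      ≤ ε * ((Real.exp ε - 1) * (1 - Real.exp (-ε))) / (Real.exp ε - Real.exp (-ε)) := by
  set s := Real.exp ε with hs_def
  set t := Real.exp (-ε) with ht_def
  have hs0 : 0 < s := Real.exp_pos _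
  have ht0 : 0 < t := Real.exp_pos _
  have hts : t < s := Real.exp_lt_exp.2 (by linarith)
  have hst : t * s = 1 := by rw [ht_def, hs_def, ← Real.exp_add]; simp
  have hst' : (s - t) ≠ 0 := by linarith
  set f : Ω → ℝ := fun x => (P.rnDeriv Q x).toReal with hf_def
  have hmeas_f : Measurable f := (P.measurable_rnDeriv Q).ennreal_toReal
  -- a.e. bounds on rnDeriv w.r.t. Q
  have h_upper : ∀ᵐ x ∂Q, P.rnDeriv Q x ≤ ENNReal.ofReal s := by
    refine ae_le_of_forall_setLIntegral_le_of_sigmaFinite (P.measurable_rnDeriv Q)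
      fun A hA _ ↦ ?_
    rw [Measure.setLIntegral_rnDeriv hPQ A, setLIntegral_const]
    exact (hclose A hA).1
  have h_lower : ∀ᵐ x ∂Q, ENNReal.ofReal t ≤ P.rnDeriv Q x := by
    refine ae_le_of_forall_setLIntegral_le_of_sigmaFinite measurable_const fun A hA _ ↦ ?_
    rw [Measure.setLIntegral_rnDeriv hPQ A, setLIntegral_const]
    calc ENNReal.ofReal t * Q A ≤ ENNReal.ofReal t * (ENNReal.ofReal s * P A) :=
          mul_le_mul_right (hclose A hA).2 _
      _ = P A := by
          rw [← mul_assoc, ← ENNReal.ofReal_mul ht0.le, hst]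
          simp
  have h_bounds : ∀ᵐ x ∂Q, t ≤ f x ∧ f x ≤ s := by
    filter_upwards [h_upper, h_lower] with x hu hl
    have hne : P.rnDeriv Q x ≠ ⊤ := (lt_of_le_of_lt hu ENNReal.ofReal_lt_top).ne
    refine ⟨?_, ?_⟩
    · rw [hf_def, ← ENNReal.toReal_ofReal ht0.le]
      exact ENNReal.toReal_mono hne hl
    · calc f x ≤ (ENNReal.ofReal s).toReal := ENNReal.toReal_mono (by simp) hu
        _ = s := ENNReal.toReal_ofReal hs0.le
  have h_boundsP : ∀ᵐ x ∂P, t ≤ f x ∧ f x ≤ s := hPQ.ae_le h_bounds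
  -- pointwise chord inequality
  have key : ∀ y : ℝ, t ≤ y → y ≤ s → Real.log y ≤ ε - 2*ε*(1/y - t)/(s - t) := by
    intro y hty hys
    have hy0 : 0 < y := lt_of_lt_of_le ht0 hty
    set u : ℝ := 1/y with hu_def
    have hu0 : 0 < u := by positivity
    have hut : t ≤ u := by
      rw [hu_def]
      rw [le_div_iff₀ hy0]
      nlinarith
    have hus : u ≤ s := by
      rw [hu_def, div_le_iff₀ hy0]
      nlinarith
    set a : ℝ := (s - u)/(s - t) with ha_def
    set b : ℝ := (u - t)/(s - t) with hb_def
    have ha : 0 ≤ a := div_nonneg (by linarith) (by linarith)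
    have hb : 0 ≤ b := div_nonneg (by linarith) (by linarith)
    have hab : a + b = 1 := by
      rw [ha_def, hb_def, ← add_div, show s - u + (u - t) = s - t by ring,
        div_self hst']
    have hconc := strictConcaveOn_log_Ioi.concaveOn.2 (Set.mem_Ioi.2 ht0)
      (Set.mem_Ioi.2 hs0) ha hb hab
    have hcomb : a • t + b • s = u := by
      rw [ha_def, hb_def, smul_eq_mul, smul_eq_mul, div_mul_eq_mul_div, div_mul_eq_mul_div, ← add_div, div_eq_iff hst']; ring
    rw [hcomb] at hconc
    have hlt : Real.log t = -ε := by rw [ht_def, Real.log_exp]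
    have hls : Real.log s = ε := by rw [hs_def, Real.log_exp]
    rw [hlt, hls, smul_eq_mul, smul_eq_mul] at hconc
    have hlogy : Real.log y = - Real.log u := by
      rw [hu_def, one_div, Real.log_inv]; ring
    rw [hlogy]
    have : -Real.log u ≤ -(a * (-ε) + b * ε) := by linarith
    refine this.trans ?_
    have ha1 : a = 1 - b := by linarith
    have hrhs : ε - 2*ε*(u - t)/(s - t) = ε - 2*ε*b := by
      rw [hb_def, mul_div_assoc]
    rw [hrhs, ha1]
    ring_nf
    exact le_rfl

  -- integrability
  have hint_log : Integrable (fun x => Real.log (f x)) P := by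
    refine (integrable_const ε).mono' (Real.measurable_log.comp hmeas_f).aestronglyMeasurable ?_
    filter_upwards [h_boundsP] with x ⟨h1, h2⟩
    have hfx0 : 0 < f x := lt_of_lt_of_le ht0 h1
    rw [Real.norm_eq_abs, abs_le]
    constructor
    · have := Real.log_le_log ht0 h1
      rw [ht_def, Real.log_exp] at this; linarith
    · have := Real.log_le_log hfx0 h2
      rw [hs_def, Real.log_exp] at this; linarith
  have hint_inv : Integrable (fun x => 1 / f x) P := by
    refine (integrable_const s).mono' (measurable_const.div hmeas_f).aestronglyMeasurable ?_
    filter_upwards [h_boundsP] with x ⟨h1, h2⟩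
    have hfx0 : 0 < f x := lt_of_lt_of_le ht0 h1
    rw [Real.norm_eq_abs, abs_of_nonneg (by positivity)]
    rw [div_le_iff₀ hfx0]
    nlinarith
  -- ∫ 1/f dP = 1
  have hinv_one : ∫ x, 1 / f x ∂P = 1 := by
    rw [← integral_rnDeriv_smul hPQ (f := fun x => 1 / f x)]
    have : ∫ x, (P.rnDeriv Q x).toReal • (1 / f x) ∂Q = ∫ x, (1:ℝ) ∂Q := by
      refine integral_congr_ae ?_
      filter_upwards [h_bounds] with x ⟨h1, _⟩
      have hfx0 : 0 < f x := lt_of_lt_of_le ht0 h1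
      rw [smul_eq_mul]
      field_simp [hf_def]
      rfl
    rw [this]
    simp
  -- put it together
  have h1 : Integrable (fun x => 2*ε*(1/f x - t)/(s - t)) P := by
    exact (((hint_inv.sub (integrable_const t)).const_mul (2*ε)).div_const (s - t))
  have hint_g : Integrable (fun x => ε - 2*ε*(1/f x - t)/(s - t)) P := by
    exact (integrable_const ε).sub h1
  have hmono : ∫ x, Real.log (f x) ∂P ≤ ∫ x, (ε - 2*ε*(1/f x - t)/(s - t)) ∂P := by
    refine integral_mono_ae hint_log hint_g ?_
    filter_upwards [h_boundsP] with x ⟨h1, h2⟩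
    exact key (f x) h1 h2
  have hcalc : ∫ x, (ε - 2*ε*(1/f x - t)/(s - t)) ∂P = ε - 2*ε*(1 - t)/(s - t) := by
    have h2 : Integrable (fun x => 1/f x - t) P := by
      exact hint_inv.sub (integrable_const t)
    rw [integral_sub (integrable_const ε) h1]
    simp only [integral_div, integral_const_mul, integral_sub hint_inv (integrable_const t),
      hinv_one, integral_const, measure_univ, probReal_univ, ENNReal.toReal_one, one_smul, smul_eq_mul, mul_one,
      one_mul]
  rw [hcalc] at hmono
  refine hmono.trans (le_of_eq ?_)
  field_simp
  linear_combination hst
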